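/- Let R satisfy: for any x₁,…,x₅ ∈ R there is x with all x − xᵢ units; let 2 ∈ R*, and let μ : P(M) → P(M′) be a harmonicity preserver. Then 2 is a unit in R′. -/

import Mathlib

/-- Harmonic quadruple of points of the projective line over `M`. -/
def Harm (R M : Type*) [Ring R] [AddCommGroup M] [Module R M]
    (p₀ p₁ p₂ p₃ : Submodule R M) : Prop :=
  ∃ g : Module.Basis (Fin 2) R M,
    p₀ = Submodule.span R {g 0} ∧ p₁ = Submodule.span R {g 1} ∧
    p₂ = Submodule.span R {g 0 + g 1} ∧ p₃ = Submodule.span R {g 0 - g 1}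

/-- Lemma 1: if `R` satisfies the five-element avoidance condition, `2 ∈ R*`,
and `μ` is a harmonicity preserver between the projective lines over the rank-2
free modules `M` and `M'`, then `2` is a unit in `R'`. -/
theorem two_isUnit_in_codomain
    (R M R' M' : Type*) [Ring R] [AddCommGroup M] [Module R M]
    [Ring R'] [AddCommGroup M'] [Module R' M']
    (hfive : ∀ x₁ x₂ x₃ x₄ x₅ : R, ∃ x : R, IsUnit (x - x₁) ∧ IsUnit (x - x₂) ∧
      IsUnit (x - x₃) ∧ IsUnit (x - x₄) ∧ IsUnit (x - x₅))
    (h2 : IsUnit (2 : R)) (e : Module.Basis (Fin 2) R M)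
    (μ : Submodule R M → Submodule R' M')
    (hμ : ∀ p₀ p₁ p₂ p₃ : Submodule R M,
      Harm R M p₀ p₁ p₂ p₃ → Harm R' M' (μ p₀) (μ p₁) (μ p₂) (μ p₃)) :
    IsUnit (2 : R') := by
  classical
  obtain ⟨u, hu⟩ := h2
  set v : R := ((u⁻¹ : Rˣ) : R) with hv
  have hvv : v + v = 1 := by
    have h1 : v * (2 : R) = 1 := by rw [← hu]; exact u.inv_mul
    calc v + v = v * (2 : R) := by rw [mul_two]
    _ = 1 := h1
  -- the linear maps T and S
  let T : M →ₗ[R] M := e.constr ℕ ![e 0 + e 1, e 0 - e 1]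
  let S : M →ₗ[R] M := e.constr ℕ ![v • e 0 + v • e 1, v • e 0 - v • e 1]
  have hT0 : T (e 0) = e 0 + e 1 := by simp [T]
  have hT1 : T (e 1) = e 0 - e 1 := by simp [T]
  have hS0 : S (e 0) = v • e 0 + v • e 1 := by simp [S]
  have hS1 : S (e 1) = v • e 0 - v • e 1 := by simp [S]
  have hST : S.comp T = LinearMap.id := by
    apply e.ext
    intro i
    fin_cases i
    · show S (T (e 0)) = e 0
      rw [hT0, map_add, hS0, hS1]
      have : (v • e 0 + v • e 1) + (v • e 0 - v • e 1) = (v + v) • e 0 := by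
        rw [add_smul]; abel
      rw [this, hvv, one_smul]
    · show S (T (e 1)) = e 1
      rw [hT1, map_sub, hS0, hS1]
      have : (v • e 0 + v • e 1) - (v • e 0 - v • e 1) = (v + v) • e 1 := by
        rw [add_smul]; abel
      rw [this, hvv, one_smul]
  have hTS : T.comp S = LinearMap.id := by
    apply e.ext
    intro i
    fin_cases i
    · show T (S (e 0)) = e 0
      rw [hS0, map_add, map_smul, map_smul, hT0, hT1]
      have : v • (e 0 + e 1) + v • (e 0 - e 1) = (v + v) • e 0 := by
        rw [add_smul, smul_add, smul_sub]; abel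
      rw [this, hvv, one_smul]
    · show T (S (e 1)) = e 1
      rw [hS1, map_sub, map_smul, map_smul, hT0, hT1]
      have : v • (e 0 + e 1) - v • (e 0 - e 1) = (v + v) • e 1 := by
        rw [add_smul, smul_add, smul_sub]; abel
      rw [this, hvv, one_smul]
  let E : M ≃ₗ[R] M := LinearEquiv.ofLinear T S hTS hST
  let f : Module.Basis (Fin 2) R M := e.map E
  have hf0 : f 0 = e 0 + e 1 := by
    simp only [f, Module.Basis.map_apply, E, LinearEquiv.ofLinear_apply]; exact hT0
  have hf1 : f 1 = e 0 - e 1 := by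
    simp only [f, Module.Basis.map_apply, E, LinearEquiv.ofLinear_apply]; exact hT1
  -- two harmonic quadruples
  obtain ⟨h, -, -, hh2, hh3⟩ := hμ _ _ _ _ ⟨e, rfl, rfl, rfl, rfl⟩
  obtain ⟨g, hg0, hg1, -, -⟩ := hμ (Submodule.span R {e 0 + e 1})
    (Submodule.span R {e 0 - e 1}) (Submodule.span R {f 0 + f 1})
    (Submodule.span R {f 0 - f 1}) ⟨f, by rw [hf0], by rw [hf1], rfl, rfl⟩
  have e2 : Submodule.span R' {h 0 + h 1} = Submodule.span R' {g 0} := hh2.symm.trans hg0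
  have e3 : Submodule.span R' {h 0 - h 1} = Submodule.span R' {g 1} := hh3.symm.trans hg1
  obtain ⟨α, hα⟩ := Submodule.mem_span_singleton.mp
    (e2 ▸ Submodule.mem_span_singleton_self (g 0))
  obtain ⟨γ, hγ⟩ := Submodule.mem_span_singleton.mp
    (e3 ▸ Submodule.mem_span_singleton_self (g 1))
  set x : R' := g.repr (h 0) 0 with hx
  set y : R' := g.repr (h 0) 1 with hy
  have hrep : x • g 0 + y • g 1 = h 0 := by
    have := g.sum_repr (h 0)
    rwa [Fin.sum_univ_two] at this
  have heq : h 0 = (x * α + y * γ) • h 0 + (x * α - y * γ) • h 1 := by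
    calc h 0 = x • g 0 + y • g 1 := hrep.symm
    _ = x • (α • (h 0 + h 1)) + y • (γ • (h 0 - h 1)) := by rw [hα, hγ]
    _ = (x * α + y * γ) • h 0 + (x * α - y * γ) • h 1 := by
        simp only [smul_smul, smul_add, smul_sub, add_smul, sub_smul]; abel
  have c0 : (1 : R') = x * α + y * γ := by
    have := congrArg (fun m => h.repr m 0) heq
    simpa [Finsupp.single_apply] using this
  have c1 : (0 : R') = x * α - y * γ := by
    have := congrArg (fun m => h.repr m 1) heq
    simpa [Finsupp.single_apply] using this
  have hyx : y * γ = x * α := by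
    have := sub_eq_zero.mp c1.symm
    exact this.symm
  have hkey : (2 : R') * (x * α) = 1 := by
    rw [two_mul]
    rw [hyx] at c0
    exact c0.symm
  exact ⟨⟨2, x * α, hkey, by rw [mul_two, ← two_mul, hkey]⟩, rfl⟩
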